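/- For every real r ≠ 0, the singular value ratio of data uniformly distributed on the arc, namely σ₂/σ₁ = √(Var₁(T)/Var₂(T)), satisfies lim_{T → 0⁺} (1/T) · √(Var₁(T)/Var₂(T)) = 1/√15; i.e., the singular value ratio is asymptotically T/√15 as the half-angle T of the arc tends to 0. -/

import Mathlib

open MeasureTheory intervalIntegral Filter

/-- Mean of the first coordinate under the uniform distribution on the arc. -/
noncomputable def mu1 (r T : ℝ) : ℝ := (1 / (2 * T)) * ∫ t in (-T)..T, r * Real.cos t

/-- Variance of the first coordinate under the uniform distribution on the arc. -/
noncomputable def Var1 (r T : ℝ) : ℝ :=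
  (1 / (2 * T)) * ∫ t in (-T)..T, (r * Real.cos t - mu1 r T) ^ 2

/-- Variance of the second coordinate under the uniform distribution on the arc. -/
noncomputable def Var2 (r T : ℝ) : ℝ :=
  (1 / (2 * T)) * ∫ t in (-T)..T, (r * Real.sin t) ^ 2

section Helpers
open Real Set
set_option maxHeartbeats 1000000

lemma nonneg_of_deriv (f f' : ℝ → ℝ) (h0 : f 0 = 0)
    (hd : ∀ x, HasDerivAt f (f' x) x) (hp : ∀ x, 0 ≤ x → 0 ≤ f' x) :
    ∀ x, 0 ≤ x → 0 ≤ f x := by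
  intro x hx
  have hm : MonotoneOn f (Ici 0) := by
    apply monotoneOn_of_deriv_nonneg (convex_Ici 0)
      (fun y _ => (hd y).continuousAt.continuousWithinAt)
      (fun y hy => (hd y).differentiableAt.differentiableWithinAt)
    intro y hy
    rw [(hd y).deriv]
    exact hp y (le_of_lt (by simpa using hy))
  calc (0:ℝ) = f 0 := h0.symm
  _ ≤ f x := hm (self_mem_Ici) hx hx

lemma sin_ge3 {x : ℝ} (hx : 0 ≤ x) : x - x^3/6 ≤ Real.sin x := by
  have := nonneg_of_deriv (fun x => Real.sin x - (x - x^3/6))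
    (fun x => Real.cos x - (1 - x^2/2))
    (by norm_num)
    (fun x => by
      have h := (Real.hasDerivAt_sin x).sub
        ((hasDerivAt_id x).sub ((hasDerivAt_pow 3 x).div_const 6))
      exact h.congr_deriv (by push_cast; ring))
    (fun x _ => by have := Real.one_sub_sq_div_two_le_cos (x := x); linarith)
  linarith [this x hx]

lemma cos_le4 {x : ℝ} (hx : 0 ≤ x) : Real.cos x ≤ 1 - x^2/2 + x^4/24 := by
  have := nonneg_of_deriv (fun x => (1 - x^2/2 + x^4/24) - Real.cos x)
    (fun x => Real.sin x - (x - x^3/6))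
    (by norm_num)
    (fun x => by
      have h := (((hasDerivAt_const x (1:ℝ)).sub ((hasDerivAt_pow 2 x).div_const 2)).add
        ((hasDerivAt_pow 4 x).div_const 24)).sub (Real.hasDerivAt_cos x)
      exact h.congr_deriv (by push_cast; ring))
    (fun x hx => by linarith [sin_ge3 hx])
  linarith [this x hx]

lemma sin_le5 {x : ℝ} (hx : 0 ≤ x) : Real.sin x ≤ x - x^3/6 + x^5/120 := by
  have := nonneg_of_deriv (fun x => (x - x^3/6 + x^5/120) - Real.sin x)
    (fun x => (1 - x^2/2 + x^4/24) - Real.cos x)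
    (by norm_num)
    (fun x => by
      have h := (((hasDerivAt_id x).sub ((hasDerivAt_pow 3 x).div_const 6)).add
        ((hasDerivAt_pow 5 x).div_const 120)).sub (Real.hasDerivAt_sin x)
      exact h.congr_deriv (by push_cast; ring))
    (fun x hx => by linarith [cos_le4 hx])
  linarith [this x hx]

lemma cos_ge6 {x : ℝ} (hx : 0 ≤ x) : 1 - x^2/2 + x^4/24 - x^6/720 ≤ Real.cos x := by
  have := nonneg_of_deriv (fun x => Real.cos x - (1 - x^2/2 + x^4/24 - x^6/720))
    (fun x => (x - x^3/6 + x^5/120) - Real.sin x)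
    (by norm_num)
    (fun x => by
      have h := (Real.hasDerivAt_cos x).sub
        ((((hasDerivAt_const x (1:ℝ)).sub ((hasDerivAt_pow 2 x).div_const 2)).add
          ((hasDerivAt_pow 4 x).div_const 24)).sub ((hasDerivAt_pow 6 x).div_const 720))
      exact h.congr_deriv (by push_cast; ring))
    (fun x hx => by linarith [sin_le5 hx])
  linarith [this x hx]

lemma sin_ge7 {x : ℝ} (hx : 0 ≤ x) : x - x^3/6 + x^5/120 - x^7/5040 ≤ Real.sin x := by
  have := nonneg_of_deriv (fun x => Real.sin x - (x - x^3/6 + x^5/120 - x^7/5040))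
    (fun x => Real.cos x - (1 - x^2/2 + x^4/24 - x^6/720))
    (by norm_num)
    (fun x => by
      have h := (Real.hasDerivAt_sin x).sub
        ((((hasDerivAt_id x).sub ((hasDerivAt_pow 3 x).div_const 6)).add
          ((hasDerivAt_pow 5 x).div_const 120)).sub ((hasDerivAt_pow 7 x).div_const 5040))
      exact h.congr_deriv (by push_cast; ring))
    (fun x hx => by linarith [cos_ge6 hx])
  linarith [this x hx]

lemma int_cos (r T : ℝ) : ∫ t in (-T)..T, r * Real.cos t = 2 * r * Real.sin T := by
  rw [intervalIntegral.integral_const_mul, integral_cos, Real.sin_neg]; ring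


lemma mu1_eq (r T : ℝ) (hT : T ≠ 0) : mu1 r T = r * Real.sin T / T := by
  rw [mu1, int_cos]; field_simp



lemma var2_eq (r T : ℝ) :
    Var2 r T = (1 / (2 * T)) * (r^2 * (T - Real.sin T * Real.cos T)) := by
  rw [Var2]
  congr 1
  have : ∀ t, (r * Real.sin t)^2 = r^2 * Real.sin t ^ 2 := fun t => by ring
  simp only [this]
  rw [intervalIntegral.integral_const_mul, integral_sin_sq, Real.sin_neg, Real.cos_neg]
  ring

lemma var1_eq (r T : ℝ) (hT : T ≠ 0) :
    Var1 r T = (1 / (2 * T)) * (r^2 * (T + Real.sin T * Real.cos T - 2 * Real.sin T ^2 / T)) := by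
  rw [Var1]
  congr 1
  set m := mu1 r T with hm
  have h1 : ∀ t, (r * Real.cos t - m)^2
      = r^2 * Real.cos t ^ 2 - (2*r*m) * Real.cos t + m^2 := fun t => by ring
  simp only [h1]
  have i1 : IntervalIntegrable (fun t => r^2 * Real.cos t ^ 2 - (2*r*m) * Real.cos t)
      volume (-T) T := (Continuous.intervalIntegrable (by continuity) _ _)
  have i2 : IntervalIntegrable (fun t => r^2 * Real.cos t ^ 2) volume (-T) T :=
    (Continuous.intervalIntegrable (by continuity) _ _)
  have i3 : IntervalIntegrable (fun t => (2*r*m) * Real.cos t) volume (-T) T :=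
    (Continuous.intervalIntegrable (by continuity) _ _)
  rw [intervalIntegral.integral_add i1 intervalIntegrable_const,
      intervalIntegral.integral_sub i2 i3,
      intervalIntegral.integral_const_mul, intervalIntegral.integral_const_mul,
      integral_cos_sq, integral_cos, intervalIntegral.integral_const]
  rw [hm, mu1_eq r T hT]
  rw [Real.sin_neg, Real.cos_neg]
  field_simp
  have hTT : T^2 * T⁻¹^2 = 1 := by rw [← mul_pow, mul_inv_cancel₀ hT, one_pow]
  linear_combination (4 * r^2 * Real.sin T^2) * hTT

noncomputable def lpol (T : ℝ) : ℝ := 2/45 - T^2/140 + 163*T^4/302400 - T^6/50400 + T^8/3628800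
noncomputable def upol (T : ℝ) : ℝ := 2/45 - T^2/210 + 23*T^4/302400 + T^6/151200 - T^8/12700800
noncomputable def qlopol (T : ℝ) : ℝ := 2/3 - 2*T^2/15 + T^4/90 - T^6/2880
noncomputable def qhipol (T : ℝ) : ℝ := 2/3 - 2*T^2/15 + 4*T^4/315 - 41*T^6/60480 + T^8/50400 - T^10/3628800


noncomputable def G (T : ℝ) : ℝ :=
  (T^2 + T * Real.sin T * Real.cos T - 2 * Real.sin T ^ 2) /
    (T^3 * (T - Real.sin T * Real.cos T))

lemma G_bounds {T : ℝ} (h0 : 0 < T) (h1 : T < 1) :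
    lpol T / qhipol T ≤ G T ∧ G T ≤ upol T / qlopol T := by
  set s := Real.sin T with hs
  set c := Real.cos T with hc
  have hsm : T - T^3/6 + T^5/120 - T^7/5040 ≤ s := sin_ge7 h0.le
  have hsp : s ≤ T - T^3/6 + T^5/120 := sin_le5 h0.le
  have hcm : 1 - T^2/2 + T^4/24 - T^6/720 ≤ c := cos_ge6 h0.le
  have hcp : c ≤ 1 - T^2/2 + T^4/24 := cos_le4 h0.le
  have ht2 : T^2 < 1 := by nlinarith
  have ht4 : T^4 < 1 := by nlinarith
  have ht6 : T^6 < 1 := by nlinarith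
  have ht8 : T^8 < 1 := by nlinarith
  have ht10 : T^10 < 1 := by nlinarith
  have hAux : 0 ≤ 1 - T^2/6 + T^4/120 - T^6/5040 := by nlinarith [pow_nonneg h0.le 4]
  have hsm0 : 0 ≤ T - T^3/6 + T^5/120 - T^7/5040 := by nlinarith [mul_nonneg h0.le hAux]
  have hcm0 : 0 ≤ 1 - T^2/2 + T^4/24 - T^6/720 := by nlinarith [pow_nonneg h0.le 4]
  have hs0 : 0 ≤ s := hsm0.trans hsm
  have hc0 : 0 ≤ c := hcm0.trans hcm
  have hsp0 : 0 ≤ T - T^3/6 + T^5/120 := hs0.trans hsp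
  have h1m : (T - T^3/6 + T^5/120 - T^7/5040) * (1 - T^2/2 + T^4/24 - T^6/720) ≤ s * c :=
    mul_le_mul hsm hcm hcm0 hs0
  have h1p : s * c ≤ (T - T^3/6 + T^5/120) * (1 - T^2/2 + T^4/24) :=
    mul_le_mul hsp hcp hc0 hsp0
  have h2p : s^2 ≤ (T - T^3/6 + T^5/120)^2 := pow_le_pow_left₀ hs0 hsp 2
  have h2m : (T - T^3/6 + T^5/120 - T^7/5040)^2 ≤ s^2 := pow_le_pow_left₀ hsm0 hsm 2
  -- P bounds
  have hPlo : T^6 * lpol T ≤ T^2 + T*s*c - 2*s^2 := by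
    have key : T^6 * lpol T =
        T^2 + T*((T - T^3/6 + T^5/120 - T^7/5040) * (1 - T^2/2 + T^4/24 - T^6/720))
          - 2*(T - T^3/6 + T^5/120)^2 := by unfold lpol; ring
    linarith [key, mul_le_mul_of_nonneg_left h1m h0.le, h2p]
  have hPhi : T^2 + T*s*c - 2*s^2 ≤ T^6 * upol T := by
    have key : T^6 * upol T =
        T^2 + T*((T - T^3/6 + T^5/120) * (1 - T^2/2 + T^4/24))
          - 2*(T - T^3/6 + T^5/120 - T^7/5040)^2 := by unfold upol; ring
    linarith [key, mul_le_mul_of_nonneg_left h1p h0.le, h2m]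
  -- Q bounds
  have hQlo : T^6 * qlopol T ≤ T^3 * (T - s*c) := by
    have key : T^6 * qlopol T = T^3 * (T - (T - T^3/6 + T^5/120) * (1 - T^2/2 + T^4/24)) := by
      unfold qlopol; ring
    linarith [key, mul_le_mul_of_nonneg_left h1p (pow_nonneg h0.le 3)]
  have hQhi : T^3 * (T - s*c) ≤ T^6 * qhipol T := by
    have key : T^6 * qhipol T
        = T^3 * (T - (T - T^3/6 + T^5/120 - T^7/5040) * (1 - T^2/2 + T^4/24 - T^6/720)) := by
      unfold qhipol; ring
    linarith [key, mul_le_mul_of_nonneg_left h1m (pow_nonneg h0.le 3)]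
  have hlp0 : 0 < lpol T := by unfold lpol; nlinarith [pow_nonneg h0.le 4, pow_nonneg h0.le 8, ht2, ht6]
  have hqlo0 : 0 < qlopol T := by unfold qlopol; nlinarith [pow_nonneg h0.le 4, ht2, ht6]
  have hqhi0 : 0 < qhipol T := by unfold qhipol; nlinarith [pow_nonneg h0.le 4, pow_nonneg h0.le 8, ht2, ht6, ht10]
  have hT6 : (0:ℝ) < T^6 := by positivity
  have hQ0 : 0 < T^3 * (T - s*c) := lt_of_lt_of_le (by positivity) hQlo
  have hP0 : 0 ≤ T^2 + T*s*c - 2*s^2 := le_trans (by positivity) hPlo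
  constructor
  · have h := div_le_div₀ hP0 hPlo hQ0 hQhi
    calc lpol T / qhipol T = T^6 * lpol T / (T^6 * qhipol T) := by
          rw [mul_div_mul_left _ _ (ne_of_gt hT6)]
    _ ≤ (T^2 + T*s*c - 2*s^2) / (T^3 * (T - s*c)) := h
    _ = G T := rfl
  · have h := div_le_div₀ (le_trans hP0 hPhi) hPhi (by positivity) hQlo
    calc G T ≤ T^6 * upol T / (T^6 * qlopol T) := h
    _ = upol T / qlopol T := by rw [mul_div_mul_left _ _ (ne_of_gt hT6)]






lemma tendsto_G : Tendsto G (nhdsWithin 0 (Set.Ioi 0)) (nhds (1/15)) := by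
  have hcont : ∀ (p q : ℝ → ℝ), Continuous p → Continuous q → q 0 ≠ 0 →
      Tendsto (fun T => p T / q T) (nhdsWithin 0 (Set.Ioi 0)) (nhds (p 0 / q 0)) := by
    intro p q hp hq hq0
    exact ((hp.continuousAt.div hq.continuousAt hq0).tendsto).mono_left nhdsWithin_le_nhds
  have hlo : Tendsto (fun T => lpol T / qhipol T) (nhdsWithin 0 (Set.Ioi 0)) (nhds (1/15)) := by
    have := hcont lpol qhipol (by unfold lpol; continuity) (by unfold qhipol; continuity)
      (by unfold qhipol; norm_num)
    convert this using 2
    unfold lpol qhipol; norm_num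
  have hhi : Tendsto (fun T => upol T / qlopol T) (nhdsWithin 0 (Set.Ioi 0)) (nhds (1/15)) := by
    have := hcont upol qlopol (by unfold upol; continuity) (by unfold qlopol; continuity)
      (by unfold qlopol; norm_num)
    convert this using 2
    unfold upol qlopol; norm_num
  have hev : ∀ᶠ T in nhdsWithin 0 (Set.Ioi 0), T ∈ Set.Ioo (0:ℝ) 1 :=
    Ioo_mem_nhdsGT_of_mem (by norm_num : (0:ℝ) ∈ Set.Ico (0:ℝ) 1)
  refine tendsto_of_tendsto_of_tendsto_of_le_of_le' hlo hhi ?_ ?_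
  · exact hev.mono fun T hT => (G_bounds hT.1 hT.2).1
  · exact hev.mono fun T hT => (G_bounds hT.1 hT.2).2

theorem singular_value_ratio_asymptotics_aux (r : ℝ) (hr : r ≠ 0) :
    Tendsto (fun T : ℝ => (1 / T) * Real.sqrt (Var1 r T / Var2 r T))
      (nhdsWithin 0 (Set.Ioi 0)) (nhds (1 / Real.sqrt 15)) := by
  have hev : ∀ᶠ T in nhdsWithin 0 (Set.Ioi 0), T ∈ Set.Ioo (0:ℝ) 1 :=
    Ioo_mem_nhdsGT_of_mem (by norm_num : (0:ℝ) ∈ Set.Ico (0:ℝ) 1)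
  -- the ratio equals G eventually
  have heq : ∀ᶠ T in nhdsWithin 0 (Set.Ioi 0),
      Var1 r T / (T^2 * Var2 r T) = G T := by
    refine hev.mono fun T hT => ?_
    have h0 : 0 < T := hT.1
    have hd : Real.sin T * Real.cos T < T := by
      have h2 := Real.sin_lt (by linarith : (0:ℝ) < 2*T)
      rw [Real.sin_two_mul] at h2; linarith
    have h5 : T - Real.sin T * Real.cos T ≠ 0 := ne_of_gt (by linarith)
    rw [var1_eq r T h0.ne', var2_eq, G]
    field_simp [h0.ne', hr, h5]
  have heqE : (fun T => Var1 r T / (T^2 * Var2 r T))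
      =ᶠ[nhdsWithin 0 (Set.Ioi 0)] G := heq
  have hmain : Tendsto (fun T => Var1 r T / (T^2 * Var2 r T))
      (nhdsWithin 0 (Set.Ioi 0)) (nhds (1/15)) := Tendsto.congr' heqE.symm tendsto_G
  have hsqrt : Tendsto (fun T => Real.sqrt (Var1 r T / (T^2 * Var2 r T)))
      (nhdsWithin 0 (Set.Ioi 0)) (nhds (Real.sqrt (1/15))) :=
    (Real.continuous_sqrt.continuousAt.tendsto).comp hmain
  have hfinal : Real.sqrt (1/15) = 1 / Real.sqrt 15 := by
    rw [one_div, one_div, Real.sqrt_inv]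
  rw [← hfinal]
  refine hsqrt.congr' ?_
  refine hev.mono fun T hT => ?_
  have h0 : 0 < T := hT.1
  show Real.sqrt (Var1 r T / (T^2 * Var2 r T)) = 1/T * Real.sqrt (Var1 r T / Var2 r T)
  have h1 : Var1 r T / (T^2 * Var2 r T) = (Var1 r T / Var2 r T) * (1/T^2) := by
    rw [div_mul_div_comm, mul_one, mul_comm (T^2)]
  have h2 : Real.sqrt (1/T^2) = 1/T := by
    rw [one_div, Real.sqrt_inv, Real.sqrt_sq h0.le, one_div]
  rw [h1, Real.sqrt_mul' _ (by positivity : (0:ℝ) ≤ 1/T^2), h2]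
  ring

end Helpers

/-- for every real `r ≠ 0`, the singular value ratio
`σ₂/σ₁ = √(Var₁(T)/Var₂(T))` satisfies
`lim_{T → 0⁺} (1/T) · √(Var₁(T)/Var₂(T)) = 1/√15`. -/
theorem singular_value_ratio_asymptotics (r : ℝ) (hr : r ≠ 0) :
    Tendsto (fun T : ℝ => (1 / T) * Real.sqrt (Var1 r T / Var2 r T))
      (nhdsWithin 0 (Set.Ioi 0)) (nhds (1 / Real.sqrt 15)) :=
  singular_value_ratio_asymptotics_aux r hr
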